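/- Suppose Σ(a_s) = (2/√f) ∫_{a_s}^∞ ε(a_v) a_v/√(a_v² − a_s²) da_v and define the circularized profile ⟨Σ⟩(R) = Σ(γ_s √q_s R) with constants γ_s, q_s, f > 0. Then the spherical (Abel) deprojection ⟨ε⟩(r) = −(1/π) ∫_r^∞ (d⟨Σ⟩/dR)(R)/√(R² − r²) dR satisfies ⟨ε⟩(r) = (γ_s √q_s / √f) · ε(γ_s √q_s · r). -/

import Mathlib

open Real MeasureTheory
open Set

noncomputable def abelK (r u R : ℝ) : ℝ := R / (Real.sqrt (R^2 - r^2) * Real.sqrt (u^2 - R^2))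

noncomputable def abelF (r u R : ℝ) : ℝ :=
  Real.arcsin ((2*R^2 - r^2 - u^2) / (u^2 - r^2)) / 2

lemma abelF_hasDeriv {r u : ℝ} (hr : 0 < r) (hu : r < u) {R : ℝ} (hR : R ∈ Set.Ioo r u) :
    HasDerivAt (abelF r u) (abelK r u R) R := by
  obtain ⟨h1, h2⟩ := hR
  have hR0 : 0 < R := hr.trans h1
  have hd : (0:ℝ) < u^2 - r^2 := by nlinarith
  have hz1 : (r^2 - r^2 : ℝ) < R^2 - r^2 := by nlinarith
  have hx1 : (0:ℝ) < R^2 - r^2 := by nlinarith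
  have hx2 : (0:ℝ) < u^2 - R^2 := by nlinarith
  set z : ℝ := (2*R^2 - r^2 - u^2) / (u^2 - r^2) with hz
  have hzneg : -1 < z := by
    rw [hz, lt_div_iff₀ hd]; nlinarith
  have hzpos : z < 1 := by
    rw [hz, div_lt_iff₀ hd]; nlinarith
  have hzin : HasDerivAt (fun R : ℝ => (2*R^2 - r^2 - u^2) / (u^2 - r^2)) (4*R/(u^2-r^2)) R := by
    have : HasDerivAt (fun R : ℝ => 2*R^2 - r^2 - u^2) (4*R) R := by
      have := (hasDerivAt_pow 2 R).const_mul (2:ℝ)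
      simpa using (this.sub_const (r^2)).sub_const (u^2) |>.congr_deriv (by ring)
    simpa [div_eq_mul_inv] using this.div_const (u^2 - r^2)
  have harc := Real.hasDerivAt_arcsin (ne_of_gt hzneg) (ne_of_lt hzpos)
  have hcomp := (harc.comp R hzin).div_const 2
  refine HasDerivAt.congr_deriv (f := abelF r u) hcomp ?_
  have h1z : 1 - z^2 = 4*(R^2 - r^2)*(u^2 - R^2)/(u^2-r^2)^2 := by
    rw [hz]; field_simp; ring
  have hsq : Real.sqrt (1 - z^2) = 2 * Real.sqrt (R^2-r^2) * Real.sqrt (u^2-R^2) / (u^2-r^2) := by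
    rw [h1z]
    rw [show 4*(R^2 - r^2)*(u^2 - R^2)/(u^2-r^2)^2
        = (2 * Real.sqrt (R^2-r^2) * Real.sqrt (u^2-R^2) / (u^2-r^2))^2 by
      rw [div_pow, mul_pow, mul_pow, Real.sq_sqrt hx1.le, Real.sq_sqrt hx2.le]; ring]
    exact Real.sqrt_sq (by positivity)
  rw [abelK, hsq]
  have hs1 : Real.sqrt (R^2-r^2) > 0 := Real.sqrt_pos.2 hx1
  have hs2 : Real.sqrt (u^2-R^2) > 0 := Real.sqrt_pos.2 hx2
  field_simp
  ring

lemma abelK_nonneg {r u R : ℝ} (hR : 0 ≤ R) : 0 ≤ abelK r u R := by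
  unfold abelK; positivity

lemma abelK_integrableOn {r u : ℝ} (hr : 0 < r) (hu : r < u) :
    IntegrableOn (abelK r u) (Set.Ioo r u) := by
  have h := intervalIntegral.integrableOn_deriv_of_nonneg (g := abelF r u) (g' := abelK r u)
    (a := r) (b := u) ?_ (fun x hx => abelF_hasDeriv hr hu hx)
    (fun x hx => abelK_nonneg (by linarith [hx.1]))
  · exact h.mono_set Set.Ioo_subset_Ioc_self
  · apply Continuous.continuousOn
    exact (Real.continuous_arcsin.comp (by fun_prop)).div_const 2

lemma abelK_integral {r u : ℝ} (hr : 0 < r) (hu : r < u) :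
    ∫ R in Set.Ioo r u, abelK r u R = Real.pi / 2 := by
  have hcont : ContinuousOn (abelF r u) (Set.Icc r u) := by
    exact ((Real.continuous_arcsin.comp (by fun_prop)).div_const 2).continuousOn
  have hint : IntervalIntegrable (abelK r u) volume r u := by
    rw [intervalIntegrable_iff_integrableOn_Ioo_of_le hu.le]
    exact abelK_integrableOn hr hu
  have h := intervalIntegral.integral_eq_sub_of_hasDeriv_right_of_le hu.le hcont
    (fun x hx => (abelF_hasDeriv hr hu hx).hasDerivWithinAt) hint
  have hd : u^2 - r^2 ≠ 0 := by nlinarith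
  have hFu : abelF r u u = Real.pi / 4 := by
    unfold abelF
    rw [show (2*u^2 - r^2 - u^2) / (u^2 - r^2) = 1 by field_simp; ring]
    rw [Real.arcsin_one]; ring
  have hFr : abelF r u r = -(Real.pi / 4) := by
    unfold abelF
    rw [show (2*r^2 - r^2 - u^2) / (u^2 - r^2) = -1 by field_simp; ring]
    rw [Real.arcsin_neg, Real.arcsin_one]; ring
  rw [intervalIntegral.integral_of_le hu.le, integral_Ioc_eq_integral_Ioo] at h
  rw [h, hFu, hFr]; ring

lemma sqrt_sub_sq_hasDeriv {R u : ℝ} (hR : 0 < R) (hu : R < u) :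
    HasDerivAt (fun u => Real.sqrt (u^2 - R^2)) (u / Real.sqrt (u^2 - R^2)) u := by
  have hpos : (0:ℝ) < u^2 - R^2 := by nlinarith
  have h1 : HasDerivAt (fun u : ℝ => u^2 - R^2) (2*u) u := by
    simpa using (hasDerivAt_pow 2 u).sub_const (R^2)
  have := (Real.hasDerivAt_sqrt hpos.ne').comp u h1
  refine HasDerivAt.congr_deriv (f := fun u => Real.sqrt (u^2 - R^2)) this ?_
  have hs : Real.sqrt (u^2 - R^2) ≠ 0 := (Real.sqrt_pos.2 hpos).ne'
  field_simp

lemma subst_lemma {R : ℝ} (hR : 0 < R) (ψ : ℝ → ℝ) :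
    ∫ t in Set.Ioi (0:ℝ), ψ (Real.sqrt (R^2 + t^2))
      = ∫ u in Set.Ioi R, u / Real.sqrt (u^2 - R^2) * ψ u := by
  have himg : (fun u => Real.sqrt (u^2 - R^2)) '' Set.Ioi R = Set.Ioi 0 := by
    ext t
    constructor
    · rintro ⟨u, hu, rfl⟩
      have : (0:ℝ) < u^2 - R^2 := by have := hu.out; nlinarith
      exact Real.sqrt_pos.2 this
    · intro ht
      have ht' : (0:ℝ) < t := ht
      refine ⟨Real.sqrt (R^2 + t^2), ?_, ?_⟩
      · have h1 : R^2 < R^2 + t^2 := by nlinarith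
        have := Real.sqrt_lt_sqrt (sq_nonneg R) h1
        rwa [Real.sqrt_sq hR.le] at this
      · show Real.sqrt (Real.sqrt (R^2 + t^2) ^ 2 - R^2) = t
        rw [Real.sq_sqrt (by positivity), show R^2 + t^2 - R^2 = t^2 by ring,
          Real.sqrt_sq ht'.le]
  have hderiv : ∀ u ∈ Set.Ioi R, HasDerivWithinAt (fun u => Real.sqrt (u^2 - R^2))
      (u / Real.sqrt (u^2 - R^2)) (Set.Ioi R) u :=
    fun u hu => (sqrt_sub_sq_hasDeriv hR hu.out).hasDerivWithinAt
  have hinj : Set.InjOn (fun u => Real.sqrt (u^2 - R^2)) (Set.Ioi R) := by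
    have hmono : StrictMonoOn (fun u => Real.sqrt (u^2 - R^2)) (Set.Ioi R) := by
      intro x hx y hy hxy
      have hx0 : 0 < x := hR.trans hx.out
      apply Real.sqrt_lt_sqrt (by nlinarith [hx.out]) (by nlinarith)
    exact hmono.injOn
  have := MeasureTheory.integral_image_eq_integral_abs_deriv_smul measurableSet_Ioi hderiv hinj
    (fun t => ψ (Real.sqrt (R^2 + t^2)))
  rw [himg] at this
  rw [this]
  apply MeasureTheory.setIntegral_congr_fun measurableSet_Ioi
  intro u hu
  have hu' : R < u := hu.out
  have hu0 : 0 < u := hR.trans hu'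
  have hpos : (0:ℝ) < u^2 - R^2 := by nlinarith
  have h1 : Real.sqrt (R^2 + Real.sqrt (u^2 - R^2)^2) = u := by
    rw [Real.sq_sqrt hpos.le, show R^2 + (u^2 - R^2) = u^2 by ring, Real.sqrt_sq hu0.le]
  simp only [smul_eq_mul, h1]
  rw [abs_of_pos (by positivity)]

lemma exists_vanish_bound (G : ℝ → ℝ) (hGs : HasCompactSupport G) :
    ∃ b : ℝ, 0 < b ∧ ∀ x, b < x → G x = 0 ∧ deriv G x = 0 := by
  obtain ⟨b₀, hb₀⟩ := hGs.isCompact.bddAbove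
  refine ⟨max b₀ 1, lt_of_lt_of_le one_pos (le_max_right _ _), fun x hx => ?_⟩
  have hxn : x ∉ tsupport G := by
    intro hmem
    exact absurd ((hb₀ hmem).trans (le_max_left b₀ 1)) (not_le.2 hx)
  constructor
  · exact image_eq_zero_of_notMem_tsupport hxn
  · by_contra h
    exact hxn (support_deriv_subset (by simpa [Function.mem_support] using h))

lemma derivP (G : ℝ → ℝ) (hG : ContDiff ℝ 1 G) (hGs : HasCompactSupport G)
    {R₀ : ℝ} (hR₀ : 0 < R₀) :
    HasDerivAt (fun R => ∫ t in Set.Ioi (0:ℝ), G (Real.sqrt (R^2 + t^2)))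
      (∫ t in Set.Ioi (0:ℝ), deriv G (Real.sqrt (R₀^2 + t^2)) * (R₀ / Real.sqrt (R₀^2 + t^2)))
      R₀ := by
  obtain ⟨b, hb0, hb⟩ := exists_vanish_bound G hGs
  have hGc : Continuous G := hG.continuous
  have hG'c : Continuous (deriv G) := hG.continuous_deriv le_rfl
  obtain ⟨M, hM⟩ := (hGs.deriv).exists_bound_of_continuous hG'c
  obtain ⟨MG, hMG⟩ := hGs.exists_bound_of_continuous hGc
  have hM0 : 0 ≤ M := (norm_nonneg _).trans (hM 0)
  set μ := volume.restrict (Set.Ioi (0:ℝ)) with hμ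
  have hbint : ∀ C : ℝ, Integrable ((Set.Ioc (0:ℝ) b).indicator (fun _ => C)) μ := by
    intro C
    rw [integrable_indicator_iff measurableSet_Ioc]
    refine integrableOn_const (ne_of_lt ?_)
    rw [hμ, Measure.restrict_apply measurableSet_Ioc]
    exact lt_of_le_of_lt (measure_mono Set.inter_subset_left) measure_Ioc_lt_top
  have hsqrt_gt : ∀ x t : ℝ, 0 < t → b < t → b < Real.sqrt (x^2 + t^2) := by
    intro x t ht htb
    have h1 : t^2 ≤ x^2 + t^2 := by nlinarith
    have := Real.sqrt_le_sqrt h1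
    rw [Real.sqrt_sq ht.le] at this
    linarith
  have key := hasDerivAt_integral_of_dominated_loc_of_deriv_le (μ := μ) (x₀ := R₀)
      (F := fun R t => G (Real.sqrt (R^2 + t^2)))
      (F' := fun R t => deriv G (Real.sqrt (R^2 + t^2)) * (R / Real.sqrt (R^2 + t^2)))
      (bound := (Set.Ioc (0:ℝ) b).indicator (fun _ => M))
      (Metric.ball_mem_nhds R₀ one_pos) ?_ ?_ ?_ ?_ (hbint M) ?_
  · exact key.2
  · refine Filter.Eventually.of_forall (fun x => Continuous.aestronglyMeasurable ?_)
    fun_prop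
  · refine Integrable.mono' (hbint MG) (Continuous.aestronglyMeasurable (by fun_prop)) ?_
    filter_upwards [self_mem_ae_restrict measurableSet_Ioi] with t ht
    by_cases htb : t ≤ b
    · rw [Set.indicator_of_mem (Set.mem_Ioc.2 ⟨ht, htb⟩)]
      exact hMG _
    · rw [Set.indicator_of_notMem (by simp [Set.mem_Ioc]; intro _; linarith)]
      rw [(hb _ (hsqrt_gt R₀ t ht (not_le.1 htb))).1]
      simp
  · apply Continuous.aestronglyMeasurable
    have hden : ∀ t : ℝ, Real.sqrt (R₀^2 + t^2) ≠ 0 := by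
      intro t
      exact (Real.sqrt_pos.2 (by positivity)).ne'
    apply Continuous.mul
    · fun_prop
    · exact continuous_const.div (by fun_prop) hden
  · filter_upwards [self_mem_ae_restrict measurableSet_Ioi] with t ht
    intro x _
    by_cases htb : t ≤ b
    · rw [Set.indicator_of_mem (Set.mem_Ioc.2 ⟨ht, htb⟩)]
      have hpos : (0:ℝ) < x^2 + t^2 := by have : (0:ℝ) < t := ht; positivity
      have hs := Real.sqrt_pos.2 hpos
      rw [Real.norm_eq_abs, abs_mul]
      have h2 : |x / Real.sqrt (x^2 + t^2)| ≤ 1 := by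
        rw [abs_div, abs_of_pos hs, div_le_one hs]
        have h3 : x^2 ≤ x^2 + t^2 := by nlinarith
        have := Real.sqrt_le_sqrt h3
        rwa [Real.sqrt_sq_eq_abs] at this
      calc |deriv G (Real.sqrt (x^2 + t^2))| * |x / Real.sqrt (x^2 + t^2)|
          ≤ M * 1 := mul_le_mul (hM _) h2 (abs_nonneg _) hM0
        _ = M := mul_one M
    · rw [Set.indicator_of_notMem (by simp [Set.mem_Ioc]; intro _; linarith)]
      rw [(hb _ (hsqrt_gt x t ht (not_le.1 htb))).2]
      simp
  · filter_upwards [self_mem_ae_restrict measurableSet_Ioi] with t ht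
    intro x _
    have ht' : (0:ℝ) < t := ht
    have hpos : (0:ℝ) < x^2 + t^2 := by positivity
    have h1 : HasDerivAt (fun x : ℝ => x^2 + t^2) (2*x) x := by
      simpa using (hasDerivAt_pow 2 x).add_const (t^2)
    have hinner : HasDerivAt (fun x => Real.sqrt (x^2 + t^2)) (x / Real.sqrt (x^2 + t^2)) x := by
      have := (Real.hasDerivAt_sqrt hpos.ne').comp x h1
      refine HasDerivAt.congr_deriv (f := fun x => Real.sqrt (x^2 + t^2)) this ?_
      have hs : Real.sqrt (x^2 + t^2) ≠ 0 := (Real.sqrt_pos.2 hpos).ne'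
      field_simp
    have houter : HasDerivAt G (deriv G (Real.sqrt (x^2 + t^2))) (Real.sqrt (x^2 + t^2)) :=
      (hG.differentiable one_ne_zero _).hasDerivAt
    exact houter.comp x hinner

lemma abelK_IoiIntegrable {r u : ℝ} (hr : 0 < r) (hu : r < u) :
    IntegrableOn (abelK r u) (Set.Ioi r) := by
  have heq : Set.EqOn ((Set.Ioo r u).indicator (abelK r u)) (abelK r u) (Set.Ioi r) := by
    intro R hR
    by_cases hRu : R < u
    · rw [Set.indicator_of_mem (Set.mem_Ioo.2 ⟨hR.out, hRu⟩)]
    · rw [Set.indicator_of_notMem (by simp [Set.mem_Ioo]; intro _; linarith)]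
      have : Real.sqrt (u^2 - R^2) = 0 := by
        apply Real.sqrt_eq_zero_of_nonpos
        have := hR.out; nlinarith
      unfold abelK
      rw [this, mul_zero, div_zero]
  exact (((integrable_indicator_iff measurableSet_Ioo).2
    (abelK_integrableOn hr hu)).integrableOn).congr_fun heq measurableSet_Ioi

lemma abelK_IoiIntegral {r u : ℝ} (hr : 0 < r) (hu : r < u) :
    ∫ R in Set.Ioi r, abelK r u R = Real.pi / 2 := by
  have heq : Set.EqOn (abelK r u) ((Set.Ioo r u).indicator (abelK r u)) (Set.Ioi r) := by
    intro R hR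
    by_cases hRu : R < u
    · rw [Set.indicator_of_mem (Set.mem_Ioo.2 ⟨hR.out, hRu⟩)]
    · rw [Set.indicator_of_notMem (by simp [Set.mem_Ioo]; intro _; linarith)]
      have : Real.sqrt (u^2 - R^2) = 0 := by
        apply Real.sqrt_eq_zero_of_nonpos
        have := hR.out; nlinarith
      unfold abelK
      rw [this, mul_zero, div_zero]
  rw [MeasureTheory.setIntegral_congr_fun measurableSet_Ioi heq,
    MeasureTheory.setIntegral_indicator measurableSet_Ioo,
    Set.inter_eq_self_of_subset_right Set.Ioo_subset_Ioi_self]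
  exact abelK_integral hr hu


/-- Theorem 4 of the paper: the deprojected spherical average of an ellipsoidal
distribution ε(a_v) equals the geometric factor γ_s √q_s/√f times ε evaluated
at a_v = γ_s √q_s r. Here Σ is the elliptical projection of ε, ⟨Σ⟩ its
effective circular average, and ⟨ε⟩ its spherical (Abel) deprojection. -/
theorem stmt8 (f γs qs : ℝ) (hf : 0 < f) (hγ : 0 < γs) (hqs : 0 < qs)
    (ε : ℝ → ℝ) (hε : ContDiff ℝ 1 ε) (hsupp : HasCompactSupport ε)
    (hpos : Function.support ε ⊆ Set.Ioi (0:ℝ))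
    (Sig : ℝ → ℝ)
    (hSig : ∀ a : ℝ, Sig a = (2 / Real.sqrt f) *
      ∫ v in Set.Ioi a, ε v * v / Real.sqrt (v ^ 2 - a ^ 2))
    (Sigavg : ℝ → ℝ) (hSigavg : ∀ R : ℝ, Sigavg R = Sig (γs * Real.sqrt qs * R))
    (εavg : ℝ → ℝ)
    (havg : ∀ r : ℝ, εavg r = -(1 / Real.pi) *
      ∫ R in Set.Ioi r, (deriv Sigavg R) / Real.sqrt (R ^ 2 - r ^ 2)) :
    ∀ r : ℝ, 0 < r →
      εavg r = (γs * Real.sqrt qs / Real.sqrt f) * ε (γs * Real.sqrt qs * r) := by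
  intro r hr
  set c := γs * Real.sqrt qs with hcdef
  have hc : 0 < c := mul_pos hγ (Real.sqrt_pos.2 hqs)
  set G : ℝ → ℝ := fun u => ε (c * u) with hGdef
  have hG : ContDiff ℝ 1 G := hε.comp (contDiff_const.mul contDiff_id)
  have hGs : HasCompactSupport G := by
    simpa [smul_eq_mul] using hsupp.comp_smul (c := c) hc.ne'
  have hG'c : Continuous (deriv G) := hG.continuous_deriv le_rfl
  have hsf : 0 < Real.sqrt f := Real.sqrt_pos.2 hf
  -- Step A : rescale the projection integral
  have hA : ∀ R : ℝ, Sigavg R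
      = (2*c/Real.sqrt f) * ∫ u in Set.Ioi R, G u * (u / Real.sqrt (u^2 - R^2)) := by
    intro R
    rw [hSigavg, hSig]
    have h1 := MeasureTheory.integral_comp_mul_left_Ioi
      (fun v => ε v * v / Real.sqrt (v^2 - (c*R)^2)) R hc
    have h2 : (∫ v in Set.Ioi (c*R), ε v * v / Real.sqrt (v^2 - (c*R)^2))
        = c * ∫ x in Set.Ioi R, ε (c*x) * (c*x) / Real.sqrt ((c*x)^2 - (c*R)^2) := by
      rw [h1, smul_eq_mul, ← mul_assoc, mul_inv_cancel₀ hc.ne', one_mul]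
    rw [h2]
    have h3 : (∫ x in Set.Ioi R, ε (c*x) * (c*x) / Real.sqrt ((c*x)^2 - (c*R)^2))
        = ∫ u in Set.Ioi R, G u * (u / Real.sqrt (u^2 - R^2)) := by
      apply MeasureTheory.setIntegral_congr_fun measurableSet_Ioi
      intro u _
      show ε (c*u) * (c*u) / Real.sqrt ((c*u)^2 - (c*R)^2) = G u * (u / Real.sqrt (u^2 - R^2))
      rw [show (c*u)^2 - (c*R)^2 = c^2 * (u^2 - R^2) by ring,
        Real.sqrt_mul (sq_nonneg c), Real.sqrt_sq hc.le,
        show ε (c*u) * (c*u) = c * (ε (c*u) * u) by ring,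
        mul_div_mul_left _ _ hc.ne', mul_div_assoc]
    rw [h3]; ring
  have hAP : ∀ R : ℝ, 0 < R → (∫ u in Set.Ioi R, G u * (u / Real.sqrt (u^2 - R^2)))
      = ∫ t in Set.Ioi (0:ℝ), G (Real.sqrt (R^2 + t^2)) := by
    intro R hR
    rw [subst_lemma hR G]
    exact MeasureTheory.setIntegral_congr_fun measurableSet_Ioi (fun u _ => mul_comm _ _)
  have hSig_eq : Set.EqOn Sigavg
      (fun R => (2*c/Real.sqrt f) * ∫ t in Set.Ioi (0:ℝ), G (Real.sqrt (R^2 + t^2)))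
      (Set.Ioi 0) := by
    intro R hR
    rw [hA R, hAP R hR.out]
  have hDeriv : ∀ R ∈ Set.Ioi r, deriv Sigavg R
      = (2*c/Real.sqrt f) * ∫ u in Set.Ioi R, deriv G u * (R / Real.sqrt (u^2 - R^2)) := by
    intro R hR
    have hR0 : 0 < R := hr.trans hR.out
    have hev : Sigavg =ᶠ[nhds R]
        (fun R' => (2*c/Real.sqrt f) * ∫ t in Set.Ioi (0:ℝ), G (Real.sqrt (R'^2 + t^2))) :=
      Filter.eventuallyEq_of_mem (Ioi_mem_nhds hR0) hSig_eq
    rw [hev.deriv_eq]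
    rw [(HasDerivAt.const_mul (2*c/Real.sqrt f) (derivP G hG hGs hR0)).deriv]
    congr 1
    rw [subst_lemma hR0 (fun u => deriv G u * (R/u))]
    apply MeasureTheory.setIntegral_congr_fun measurableSet_Ioi
    intro u hu
    have hu0 : u ≠ 0 := (hR0.trans hu.out).ne'
    show u / Real.sqrt (u^2 - R^2) * (deriv G u * (R/u))
        = deriv G u * (R / Real.sqrt (u^2 - R^2))
    by_cases hs : Real.sqrt (u^2 - R^2) = 0
    · simp [hs]
    · field_simp
  -- Step: rewrite the Abel integrand using the kernel abelK
  have hstep : ∀ R ∈ Set.Ioi r, deriv Sigavg R / Real.sqrt (R^2 - r^2)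
      = (2*c/Real.sqrt f) * ∫ u in Set.Ioi r, deriv G u * abelK r u R := by
    intro R hR
    rw [hDeriv R hR, mul_div_assoc]
    congr 1
    rw [← MeasureTheory.integral_div]
    have h4 : (∫ u in Set.Ioi R,
          deriv G u * (R / Real.sqrt (u^2 - R^2)) / Real.sqrt (R^2 - r^2))
        = ∫ u in Set.Ioi R, deriv G u * abelK r u R := by
      apply MeasureTheory.setIntegral_congr_fun measurableSet_Ioi
      intro u _
      show deriv G u * (R / Real.sqrt (u^2 - R^2)) / Real.sqrt (R^2 - r^2)
          = deriv G u * abelK r u R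
      unfold abelK
      rw [mul_div_assoc, div_div, mul_comm (Real.sqrt (u^2 - R^2)) _]
    rw [h4]
    have heq : Set.EqOn (fun u => deriv G u * abelK r u R)
        ((Set.Ioi R).indicator (fun u => deriv G u * abelK r u R)) (Set.Ioi r) := by
      intro u hu
      have hu0 : 0 < u := hr.trans hu.out
      by_cases huR : R < u
      · exact (Set.indicator_of_mem (show u ∈ Set.Ioi R from huR)
          (fun u => deriv G u * abelK r u R)).symm
      · rw [Set.indicator_of_notMem (by simpa using huR)]
        push_neg at huR
        have hs : Real.sqrt (u^2 - R^2) = 0 := by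
          apply Real.sqrt_eq_zero_of_nonpos
          nlinarith
        show deriv G u * abelK r u R = 0
        unfold abelK
        rw [hs, mul_zero, div_zero, mul_zero]
    rw [MeasureTheory.setIntegral_congr_fun measurableSet_Ioi heq,
      MeasureTheory.setIntegral_indicator measurableSet_Ioi, Set.Ioi_inter_Ioi,
      sup_eq_right.2 hR.out.le]
  -- measurability on the product
  have hmeas : AEStronglyMeasurable (Function.uncurry (fun R u => deriv G u * abelK r u R))
      ((volume.restrict (Set.Ioi r)).prod (volume.restrict (Set.Ioi r))) := by
    apply Measurable.aestronglyMeasurable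
    unfold Function.uncurry abelK
    apply Measurable.mul
    · exact hG'c.measurable.comp measurable_snd
    · apply Measurable.div measurable_fst
      apply Measurable.mul
      · exact Real.continuous_sqrt.measurable.comp
          (((measurable_fst.pow_const 2).sub_const _))
      · exact Real.continuous_sqrt.measurable.comp
          ((measurable_snd.pow_const 2).sub (measurable_fst.pow_const 2))
  have hsec : ∀ u ∈ Set.Ioi r, IntegrableOn (fun R => deriv G u * abelK r u R) (Set.Ioi r) :=
    fun u hu => (abelK_IoiIntegrable hr hu.out).const_mul _
  have hval : ∀ u ∈ Set.Ioi r, (∫ R in Set.Ioi r, deriv G u * abelK r u R)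
      = deriv G u * (Real.pi/2) := by
    intro u hu
    rw [MeasureTheory.integral_const_mul, abelK_IoiIntegral hr hu.out]
  have hnorm : ∀ u ∈ Set.Ioi r, (∫ R in Set.Ioi r, ‖deriv G u * abelK r u R‖)
      = |deriv G u| * (Real.pi/2) := by
    intro u hu
    have h5 : Set.EqOn (fun R => ‖deriv G u * abelK r u R‖)
        (fun R => |deriv G u| * abelK r u R) (Set.Ioi r) := by
      intro R hR
      show ‖deriv G u * abelK r u R‖ = |deriv G u| * abelK r u R
      rw [Real.norm_eq_abs, abs_mul, abs_of_nonneg (abelK_nonneg (le_of_lt (hr.trans hR.out)))]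
    rw [MeasureTheory.setIntegral_congr_fun measurableSet_Ioi h5,
      MeasureTheory.integral_const_mul, abelK_IoiIntegral hr hu.out]
  have hbig : Integrable (Function.uncurry (fun R u => deriv G u * abelK r u R))
      ((volume.restrict (Set.Ioi r)).prod (volume.restrict (Set.Ioi r))) := by
    rw [MeasureTheory.integrable_prod_iff' hmeas]
    constructor
    · filter_upwards [self_mem_ae_restrict measurableSet_Ioi] with u hu
      exact hsec u hu
    · have hgl : Integrable (fun u => |deriv G u| * (Real.pi/2))
          (volume.restrict (Set.Ioi r)) := by
        apply Integrable.integrableOn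
        apply Continuous.integrable_of_hasCompactSupport (by fun_prop)
        apply (hGs.deriv).mono'
        intro u hu
        apply subset_tsupport
        simp only [Function.mem_support] at hu ⊢
        intro h0
        apply hu
        rw [h0]
        simp
      apply hgl.congr
      filter_upwards [self_mem_ae_restrict measurableSet_Ioi] with u hu
      exact (hnorm u hu).symm
  have hswap := MeasureTheory.integral_integral_swap
    (f := fun R u => deriv G u * abelK r u R) hbig
  -- final assembly
  rw [havg r, MeasureTheory.setIntegral_congr_fun measurableSet_Ioi hstep,
    MeasureTheory.integral_const_mul, hswap,
    MeasureTheory.setIntegral_congr_fun measurableSet_Ioi hval,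
    MeasureTheory.integral_mul_const _ (deriv G),
    HasCompactSupport.integral_Ioi_deriv_eq hG hGs r]
  rw [show ε (c * r) = G r from rfl]
  field_simp
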